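/- (Blow-up of the empirical log-likelihood at the boundary of its domain) Suppose X_1, …, X_n affinely span ℝ^d. If (θ_k) is a sequence in Θ_n converging to a point b ∈ ℝ^d with b ∉ Θ_n, then R(θ_k) → 0 as k → ∞; equivalently, l(θ_k) → +∞. -/

import Mathlib

noncomputable section

/-- The set of empirical likelihood weight vectors for `θ`:
`W(θ) = {w : wᵢ ≥ 0, Σ wᵢ = 1, Σ wᵢ Xᵢ = θ}`. -/
def Wset (n d : ℕ) (X : Fin n → EuclideanSpace ℝ (Fin d))
    (θ : EuclideanSpace ℝ (Fin d)) : Set (Fin n → ℝ) :=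
  {w | (∀ i, 0 ≤ w i) ∧ ∑ i, w i = 1 ∧ ∑ i, w i • X i = θ}

/-- The empirical likelihood ratio `R(θ) = sup {∏ n·wᵢ : w ∈ W(θ)}` (the sup over
the empty set is `0`, since `Real.sSup ∅ = 0`). -/
def elR (n d : ℕ) (X : Fin n → EuclideanSpace ℝ (Fin d))
    (θ : EuclideanSpace ℝ (Fin d)) : ℝ :=
  sSup ((fun w => ∏ i, (n : ℝ) * w i) '' Wset n d X θ)

/-- The empirical log-likelihood ratio `l(θ) = -2 log R(θ)`. -/
def elln (n d : ℕ) (X : Fin n → EuclideanSpace ℝ (Fin d))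
    (θ : EuclideanSpace ℝ (Fin d)) : ℝ :=
  -2 * Real.log (elR n d X θ)

/-- The sample mean `θ̃ = n⁻¹ Σ Xᵢ`. -/
def sampleMean (n d : ℕ) (X : Fin n → EuclideanSpace ℝ (Fin d)) :
    EuclideanSpace ℝ (Fin d) :=
  (n : ℝ)⁻¹ • ∑ i, X i

/-- The composite similarity mapping `h(θ) = θ̃ + (1 + l(θ)/(2n))(θ - θ̃)`. -/
def csm (n d : ℕ) (X : Fin n → EuclideanSpace ℝ (Fin d))
    (θ : EuclideanSpace ℝ (Fin d)) : EuclideanSpace ℝ (Fin d) :=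
  sampleMean n d X + (1 + elln n d X θ / (2 * n)) • (θ - sampleMean n d X)

open Filter Finset Topology

lemma mem_hull_weights {n d : ℕ} (X : Fin n → EuclideanSpace ℝ (Fin d))
    {x : EuclideanSpace ℝ (Fin d)} (hx : x ∈ convexHull ℝ (Set.range X)) :
    ∃ w : Fin n → ℝ, (∀ i, 0 ≤ w i) ∧ ∑ i, w i = 1 ∧ ∑ i, w i • X i = x := by
  rw [convexHull_range_eq_exists_affineCombination] at hx
  obtain ⟨s, w, hw0, hw1, hwx⟩ := hx
  refine ⟨fun i => if i ∈ s then w i else 0, fun i => ?_, ?_, ?_⟩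
  · dsimp only
    split
    · exact hw0 _ ‹_›
    · exact le_rfl
  · simp only
    rw [Finset.sum_ite_mem, Finset.univ_inter, hw1]
  · have := affineCombination_eq_linear_combination s X w hw1
    rw [this] at hwx
    rw [← hwx]
    simp only
    rw [show (∑ i, (if i ∈ s then w i else 0) • X i)
        = ∑ i, (if i ∈ s then w i • X i else 0) by
      refine Finset.sum_congr rfl fun i _ => ?_
      split <;> simp]
    rw [Finset.sum_ite_mem, Finset.univ_inter]

lemma Wset_le_one {n d : ℕ} {X : Fin n → EuclideanSpace ℝ (Fin d)}
    {θ : EuclideanSpace ℝ (Fin d)} {w : Fin n → ℝ} (hw : w ∈ Wset n d X θ) (i : Fin n) :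
    w i ≤ 1 := by
  obtain ⟨hw0, hw1, -⟩ := hw
  calc w i ≤ ∑ j, w j := Finset.single_le_sum (fun j _ => hw0 j) (Finset.mem_univ i)
  _ = 1 := hw1

lemma elR_bddAbove (n d : ℕ) (X : Fin n → EuclideanSpace ℝ (Fin d))
    (θ : EuclideanSpace ℝ (Fin d)) :
    BddAbove ((fun w => ∏ i, (n : ℝ) * w i) '' Wset n d X θ) := by
  refine ⟨(n : ℝ) ^ n, ?_⟩
  rintro _ ⟨w, hw, rfl⟩
  calc (∏ i, (n : ℝ) * w i) ≤ ∏ _i : Fin n, (n : ℝ) := by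
        refine Finset.prod_le_prod (fun i _ => mul_nonneg (Nat.cast_nonneg n) (hw.1 i))
          (fun i _ => ?_)
        have := Wset_le_one hw i
        nlinarith [Nat.cast_nonneg (α := ℝ) n]
    _ = (n : ℝ) ^ n := by simp

lemma interior_pos_weights {n d : ℕ} (hn : 0 < n) (X : Fin n → EuclideanSpace ℝ (Fin d))
    {θ : EuclideanSpace ℝ (Fin d)} (hθ : θ ∈ interior (convexHull ℝ (Set.range X))) :
    ∃ w ∈ Wset n d X θ, ∀ i, 0 < w i := by
  have hnn : ((n : ℝ)) ≠ 0 := Nat.cast_ne_zero.mpr hn.ne'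
  have hmem : convexHull ℝ (Set.range X) ∈ nhds θ := mem_interior_iff_mem_nhds.mp hθ
  obtain ⟨r, hr0, hball⟩ := Metric.mem_nhds_iff.mp hmem
  set θt : EuclideanSpace ℝ (Fin d) := (n : ℝ)⁻¹ • ∑ i, X i with hθt
  set ε : ℝ := r / (2 * (‖θ - θt‖ + 1)) with hε
  have hnorm : (0:ℝ) ≤ ‖θ - θt‖ := norm_nonneg _
  have hε0 : 0 < ε := by positivity
  have hθ' : θ + ε • (θ - θt) ∈ convexHull ℝ (Set.range X) := by
    apply hball
    rw [Metric.mem_ball, dist_eq_norm]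
    have : θ + ε • (θ - θt) - θ = ε • (θ - θt) := by abel
    rw [this, norm_smul, Real.norm_eq_abs, abs_of_pos hε0, hε]
    rw [div_mul_eq_mul_div, div_lt_iff₀ (by positivity)]
    nlinarith
  obtain ⟨v, hv0, hv1, hvs⟩ := mem_hull_weights X hθ'
  refine ⟨fun i => (v i + ε / n) / (1 + ε), ⟨fun i => ?_, ?_, ?_⟩, fun i => ?_⟩
  · exact div_nonneg (add_nonneg (hv0 i) (by positivity)) (by positivity)
  · simp only
    rw [← Finset.sum_div, Finset.sum_add_distrib, hv1, Finset.sum_const, card_univ,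
      Fintype.card_fin, nsmul_eq_mul, mul_div_cancel₀ _ hnn, div_self (by positivity)]
  · have h1 : ∀ i : Fin n, ((v i + ε / n) / (1 + ε)) • X i
        = (1 + ε)⁻¹ • (v i • X i + (ε / n) • X i) := by
      intro i
      rw [div_eq_mul_inv, mul_comm, mul_smul, add_smul, smul_add]
    simp only [h1, ← Finset.smul_sum]
    rw [Finset.sum_add_distrib, hvs, ← Finset.smul_sum]
    have h2 : (ε / n) • (∑ i, X i) = ε • θt := by
      rw [hθt, smul_smul, div_eq_mul_inv]
    rw [h2]
    have h3 : θ + ε • (θ - θt) + ε • θt = (1 + ε) • θ := by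
      rw [smul_sub, add_smul, one_smul]; abel
    rw [h3, inv_smul_smul₀ (by positivity)]
  · exact div_pos (add_pos_of_nonneg_of_pos (hv0 i) (by positivity)) (by positivity)

/-- blow-up at the boundary: If `(θₖ) ⊆ Θₙ` converges to a point
`b ∉ Θₙ`, then `R(θₖ) → 0`, equivalently `l(θₖ) → +∞`. -/
theorem stmt16 (n d : ℕ) (hn : 0 < n) (hd : 0 < d)
    (X : Fin n → EuclideanSpace ℝ (Fin d))
    (hspan : (interior (convexHull ℝ (Set.range X))).Nonempty)
    (θ : ℕ → EuclideanSpace ℝ (Fin d))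
    (hmem : ∀ k, θ k ∈ interior (convexHull ℝ (Set.range X)))
    (b : EuclideanSpace ℝ (Fin d))
    (hb : b ∉ interior (convexHull ℝ (Set.range X)))
    (hlim : Filter.Tendsto θ Filter.atTop (nhds b)) :
    Filter.Tendsto (fun k => elR n d X (θ k)) Filter.atTop (nhds 0) ∧
      Filter.Tendsto (fun k => elln n d X (θ k)) Filter.atTop Filter.atTop := by
  obtain ⟨a, ha⟩ := hspan
  have hclosed : IsClosed (convexHull ℝ (Set.range X)) :=
    (Set.finite_range X).isClosed_convexHull (𝕜 := ℝ)
  have hbhull : b ∈ convexHull ℝ (Set.range X) :=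
    hclosed.mem_of_tendsto hlim (Eventually.of_forall fun k => interior_subset (hmem k))
  obtain ⟨f, hf⟩ := geometric_hahn_banach_open_point
    ((convex_convexHull ℝ (Set.range X)).interior) isOpen_interior hb
  -- every point of the hull satisfies f x ≤ f b
  have hXle : ∀ x ∈ convexHull ℝ (Set.range X), f x ≤ f b := by
    intro x hx
    have h0 : Tendsto (fun m : ℕ => 1 / ((m : ℝ) + 1)) atTop (𝓝 0) :=
      tendsto_one_div_add_atTop_nhds_zero_nat
    have hseq : Tendsto (fun m : ℕ => (1 / ((m : ℝ) + 1)) * f a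
        + (1 - 1 / ((m : ℝ) + 1)) * f x) atTop (𝓝 (f x)) := by
      have := (h0.mul_const (f a)).add (((tendsto_const_nhds (x := (1:ℝ))).sub h0).mul_const (f x))
      simpa using this
    refine le_of_tendsto hseq (Eventually.of_forall fun m => ?_)
    have hc : (0:ℝ) < 1 / ((m : ℝ) + 1) := by positivity
    have hc1 : (0:ℝ) ≤ 1 - 1 / ((m : ℝ) + 1) := by
      have h1 : 1 / ((m : ℝ) + 1) ≤ 1 := by
        rw [div_le_one (by positivity)]
        linarith [Nat.cast_nonneg (α := ℝ) m]
      linarith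
    have hmemi := (convex_convexHull ℝ (Set.range X)).combo_interior_closure_mem_interior
      ha (subset_closure hx) hc hc1 (by ring)
    have hlt := hf _ hmemi
    simp only [map_add, map_smul, smul_eq_mul] at hlt
    exact hlt.le
  -- some X i is strictly below the hyperplane
  have hex : ∃ i, f (X i) < f b := by
    by_contra h
    push_neg at h
    have haf := hf a ha
    obtain ⟨w, hw0, hw1, hws⟩ := mem_hull_weights X (interior_subset ha)
    have hfa : f a = ∑ i, w i * f (X i) := by
      rw [← hws]; simp
    have hba : f b ≤ f a := by
      rw [hfa]
      calc f b = ∑ i, w i * f b := by rw [← Finset.sum_mul, hw1, one_mul]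
        _ ≤ ∑ i, w i * f (X i) :=
          Finset.sum_le_sum fun i _ => mul_le_mul_of_nonneg_left (h i) (hw0 i)
    linarith
  obtain ⟨i₀, hi₀⟩ := hex
  set δ : ℝ := f b - f (X i₀) with hδdef
  have hδ : 0 < δ := sub_pos.mpr hi₀
  -- upper bound on elR
  have hub : ∀ k, elR n d X (θ k) ≤ (n : ℝ) ^ n * ((f b - f (θ k)) / δ) := by
    intro k
    have hθk : f (θ k) ≤ f b := hXle _ (interior_subset (hmem k))
    have hBnn : (0:ℝ) ≤ (n : ℝ) ^ n * ((f b - f (θ k)) / δ) :=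
      mul_nonneg (by positivity) (div_nonneg (sub_nonneg.2 hθk) hδ.le)
    refine Real.sSup_le ?_ hBnn
    rintro _ ⟨w, hw, rfl⟩
    obtain ⟨hw0, hw1, hws⟩ := hw
    have hfθ : f (θ k) = ∑ i, w i * f (X i) := by rw [← hws]; simp
    have hsum : ∑ i, w i * (f b - f (X i)) = f b - f (θ k) := by
      rw [hfθ]
      simp only [mul_sub]
      rw [Finset.sum_sub_distrib, ← Finset.sum_mul, hw1, one_mul]
    have hterm : w i₀ * δ ≤ f b - f (θ k) := by
      rw [← hsum, hδdef]
      exact Finset.single_le_sum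
        (fun i _ => mul_nonneg (hw0 i)
          (sub_nonneg.2 (hXle (X i) (subset_convexHull ℝ _ (Set.mem_range_self i)))))
        (Finset.mem_univ i₀)
    have hwi0 : w i₀ ≤ (f b - f (θ k)) / δ := by
      rw [le_div_iff₀ hδ]; exact hterm
    calc (∏ i, (n : ℝ) * w i) = (n : ℝ) ^ n * ∏ i, w i := by
          rw [Finset.prod_mul_distrib, Finset.prod_const]; simp
      _ ≤ (n : ℝ) ^ n * w i₀ := by
          refine mul_le_mul_of_nonneg_left ?_ (by positivity)
          calc (∏ i, w i) = w i₀ * ∏ i ∈ Finset.univ.erase i₀, w i :=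
                (Finset.mul_prod_erase _ _ (Finset.mem_univ i₀)).symm
            _ ≤ w i₀ * 1 := by
                refine mul_le_mul_of_nonneg_left ?_ (hw0 i₀)
                exact Finset.prod_le_one (fun i _ => hw0 i)
                  (fun i _ => Wset_le_one ⟨hw0, hw1, hws⟩ i)
            _ = w i₀ := mul_one _
      _ ≤ (n : ℝ) ^ n * ((f b - f (θ k)) / δ) :=
          mul_le_mul_of_nonneg_left hwi0 (by positivity)
  have hlb : ∀ k, 0 ≤ elR n d X (θ k) := by
    intro k
    refine Real.sSup_nonneg ?_
    rintro _ ⟨w, hw, rfl⟩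
    exact Finset.prod_nonneg fun i _ => mul_nonneg (Nat.cast_nonneg n) (hw.1 i)
  have hfb : Tendsto (fun k => f (θ k)) atTop (𝓝 (f b)) :=
    (f.continuous.tendsto b).comp hlim
  have hB : Tendsto (fun k => (n : ℝ) ^ n * ((f b - f (θ k)) / δ)) atTop (𝓝 0) := by
    have := (((tendsto_const_nhds (x := f b)).sub hfb).div_const δ).const_mul ((n : ℝ) ^ n)
    simpa using this
  have hfirst : Tendsto (fun k => elR n d X (θ k)) atTop (𝓝 0) :=
    squeeze_zero hlb hub hB
  have hpos : ∀ k, 0 < elR n d X (θ k) := by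
    intro k
    obtain ⟨w, hwW, hwpos⟩ := interior_pos_weights hn X (hmem k)
    have hp : 0 < ∏ i, (n : ℝ) * w i :=
      Finset.prod_pos fun i _ => mul_pos (Nat.cast_pos.2 hn) (hwpos i)
    exact lt_of_lt_of_le hp (le_csSup (elR_bddAbove n d X (θ k)) ⟨w, hwW, rfl⟩)
  refine ⟨hfirst, ?_⟩
  have hwithin : Tendsto (fun k => elR n d X (θ k)) atTop (𝓝[>] 0) :=
    tendsto_nhdsWithin_iff.mpr ⟨hfirst, Eventually.of_forall hpos⟩
  have hlog : Tendsto (fun k => Real.log (elR n d X (θ k))) atTop atBot :=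
    Real.tendsto_log_nhdsGT_zero.comp hwithin
  exact (tendsto_const_mul_atTop_of_neg (by norm_num : (-2:ℝ) < 0)).mpr hlog
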